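/- Let (M^{2n}, g, J) be strict nearly Kähler with holonomy of the canonical Hermitian connection contained in U(1) × U(n−1), giving TM = L ⊕ E with rank L = 2. Then the tensor r has exactly two eigenvalues, k(n−1)/2 on L and k on E, where F|_E = (k/4)·Id with ⟨FX,Y⟩ = −(1/2)Tr_L((∇_X J)(∇_Y J)). -/

import Mathlib

open RealInnerProductSpace

/-
Pointwise model of a strict nearly Kähler manifold `(M^{2n}, g, J)` whose
canonical Hermitian holonomy is contained in `U(1) × U(n−1)`, giving the
orthogonal, `J`-stable splitting `TM = L ⊕ E` with `rank L = 2`.  Here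
`A x y = (∇_x J) y`, the orthonormal frame `b` is adapted to the splitting
via `inL`, `r` is the tensor `⟨r x, y⟩ = Σ_i ⟨A(e_i)x, A(e_i)y⟩` and `F` is
given by `⟨F x, y⟩ = −(1/2) Tr_L((∇_x J)(∇_y J))`.  As proven in the paper
(Proposition 4.1) we may assume `F|_E = (k/4)·Id` for a constant `k > 0` and
`(∇_X J)Y ∈ L` whenever `X, Y ∈ E`.

STATEMENT (Corollary 4.1 (i)): `r` has exactly two eigenvalues,
`k(n−1)/2` with eigenbundle `L` and `k` with eigenbundle `E`.
-/
theorem reducibleNK_r_eigenvalues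
    (V : Type) [NormedAddCommGroup V] [InnerProductSpace ℝ V]
    [FiniteDimensional ℝ V]
    (n : ℕ) (hdim : Module.finrank ℝ V = 2 * n)
    (b : OrthonormalBasis (Fin (2 * n)) ℝ V)
    (J : V →ₗ[ℝ] V)
    (A : V →ₗ[ℝ] V →ₗ[ℝ] V)
    (r F : V →ₗ[ℝ] V)
    (L E : Submodule ℝ V)
    -- almost Hermitian structure, strict nearly Kähler condition
    (hJJ : ∀ x, J (J x) = -x)
    (hJiso : ∀ x y, ⟪J x, J y⟫ = ⟪x, y⟫)
    (hNK : ∀ x, A x x = 0)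
    (hstrict : ∀ x, x ≠ 0 → ∃ y, A x y ≠ 0)
    (hAskew : ∀ x y z, ⟪A x y, z⟫ = -⟪A x z, y⟫)
    (hAJ : ∀ x y, A x (J y) = -J (A x y))
    -- the splitting TM = L ⊕ E : orthogonal, J-stable, rank L = 2
    (hcompl : IsCompl L E)
    (horth : ∀ v ∈ L, ∀ x ∈ E, ⟪v, x⟫ = 0)
    (hJL : ∀ v ∈ L, J v ∈ L) (hJE : ∀ x ∈ E, J x ∈ E)
    (hrankL : Module.finrank ℝ L = 2)
    -- the frame is adapted to the splitting
    (inL : Fin (2 * n) → Prop) [DecidablePred inL]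
    (hadapt : ∀ i, if inL i then b i ∈ L else b i ∈ E)
    -- definition of r and of F = −(1/2) Tr_L((∇_· J)(∇_· J))
    (hr : ∀ x y, ⟪r x, y⟫ = ∑ i, ⟪A (b i) x, A (b i) y⟫)
    (hF : ∀ x y, ⟪F x, y⟫
      = -(1/2 : ℝ) * ∑ i ∈ Finset.univ.filter inL, ⟪A x (A y (b i)), b i⟫)
    -- structural facts from Proposition 4.1
    (k : ℝ) (hk : 0 < k)
    (hFE : ∀ x ∈ E, F x = (k / 4) • x)
    (hAE : ∀ x ∈ E, ∀ y ∈ E, A x y ∈ L) :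
    (∀ v ∈ L, r v = (k * (n - 1) / 2) • v)
    ∧ (∀ x ∈ E, r x = k • x) := by
  have hbo : ∀ i j, ⟪b i, b j⟫ = if i = j then (1:ℝ) else 0 :=
    orthonormal_iff_ite.mp b.orthonormal
  have hbL : ∀ i, inL i → b i ∈ L := by
    intro i hi; have h := hadapt i; rwa [if_pos hi] at h
  have hbE : ∀ i, ¬ inL i → b i ∈ E := by
    intro i hi; have h := hadapt i; rwa [if_neg hi] at h
  -- basic J facts
  have hJskew : ∀ u w : V, ⟪J u, w⟫ = -⟪u, J w⟫ := by
    intro u w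
    have h1 := hJiso u (J w)
    rw [hJJ w, inner_neg_right] at h1
    linarith
  have hJo : ∀ u : V, ⟪J u, u⟫ = 0 := by
    intro u
    have h1 := hJskew u u
    have h2 : ⟪u, J u⟫ = ⟪J u, u⟫ := real_inner_comm _ _
    linarith
  have hJo' : ∀ u : V, ⟪u, J u⟫ = 0 := by
    intro u; rw [real_inner_comm]; exact hJo u
  -- A is antisymmetric
  have hAanti : ∀ x y, A x y = - A y x := by
    intro x y
    have h := hNK (x + y)
    simp only [map_add, LinearMap.add_apply, hNK x, hNK y, zero_add, add_zero] at h
    rw [add_comm] at h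
    exact eq_neg_of_add_eq_zero_left h
  have hcyc : ∀ x y z, ⟪A x y, z⟫ = ⟪A y z, x⟫ := by
    intro x y z
    rw [hAanti x y, inner_neg_left, hAskew y x z, neg_neg]
  -- cardinality of the adapted frame pieces
  have hsum2 : 2 + Module.finrank ℝ E = 2 * n := by
    have h := Submodule.finrank_add_eq_of_isCompl hcompl
    rw [hdim, hrankL] at h
    exact h
  have hn1 : 1 ≤ n := by omega
  have hfinE : Module.finrank ℝ E = 2 * n - 2 := by omega
  have hSle : (Finset.univ.filter inL).card ≤ 2 := by
    have hon : Orthonormal ℝ (fun i : (Finset.univ.filter inL : Finset (Fin (2*n))) => b i) :=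
      b.orthonormal.comp _ Subtype.val_injective
    have hli : LinearIndependent ℝ
        (fun i : (Finset.univ.filter inL : Finset (Fin (2*n))) =>
          (⟨b i, hbL i (Finset.mem_filter.mp i.2).2⟩ : L)) := by
      apply LinearIndependent.of_comp L.subtype
      exact hon.linearIndependent
    have h := hli.fintype_card_le_finrank
    rwa [hrankL, Fintype.card_coe] at h
  have hTle : (Finset.univ.filter (fun i => ¬ inL i)).card ≤ 2 * n - 2 := by
    have hon : Orthonormal ℝ
        (fun i : (Finset.univ.filter (fun i => ¬ inL i) : Finset (Fin (2*n))) => b i) :=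
      b.orthonormal.comp _ Subtype.val_injective
    have hli : LinearIndependent ℝ
        (fun i : (Finset.univ.filter (fun i => ¬ inL i) : Finset (Fin (2*n))) =>
          (⟨b i, hbE i (Finset.mem_filter.mp i.2).2⟩ : E)) := by
      apply LinearIndependent.of_comp E.subtype
      exact hon.linearIndependent
    have h := hli.fintype_card_le_finrank
    rwa [hfinE, Fintype.card_coe] at h
  have hsplitcard :
      (Finset.univ.filter inL).card + (Finset.univ.filter (fun i => ¬ inL i)).card = 2 * n := by
    simpa using Finset.card_filter_add_card_filter_not (s := (Finset.univ : Finset (Fin (2*n)))) inL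
  have hScard : (Finset.univ.filter inL).card = 2 := by omega
  have hTcard : (Finset.univ.filter (fun i => ¬ inL i)).card = 2 * n - 2 := by omega
  obtain ⟨i1, i2, hne, hSpair⟩ := Finset.card_eq_two.mp hScard
  have hi1 : inL i1 := by
    have : i1 ∈ Finset.univ.filter inL := by rw [hSpair]; simp
    simpa using this
  have hi2 : inL i2 := by
    have : i2 ∈ Finset.univ.filter inL := by rw [hSpair]; simp
    simpa using this
  have hb1L : b i1 ∈ L := hbL i1 hi1
  have hb2L : b i2 ∈ L := hbL i2 hi2
  -- b i2 = ± J (b i1)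
  have hg : Orthonormal ℝ ![b i1, J (b i1)] := by
    rw [orthonormal_iff_ite]
    intro i j
    fin_cases i <;> fin_cases j <;>
      simp [hbo i1 i1, hJo, hJo', hJiso, show ‖J (b i1)‖ = 1 from by
        have h := hJiso (b i1) (b i1)
        rw [real_inner_self_eq_norm_sq, real_inner_self_eq_norm_sq, b.orthonormal.1 i1] at h
        nlinarith [norm_nonneg (J (b i1))]]
  have hspan : Submodule.span ℝ {b i1, J (b i1)} = L := by
    apply Submodule.eq_of_le_of_finrank_le
    · rw [Submodule.span_le]
      rintro z hz
      rcases hz with rfl | hz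
      · exact hb1L
      · rcases hz with rfl
        exact hJL _ hb1L
    · rw [hrankL]
      have hset : ({b i1, J (b i1)} : Set V) = Set.range ![b i1, J (b i1)] := by
        simp [Matrix.range_cons, Matrix.range_empty]
        exact Set.pair_comm _ _
      rw [hset, finrank_span_eq_card hg.linearIndependent]
      simp
  obtain ⟨a, c, hac⟩ := Submodule.mem_span_pair.mp (hspan ▸ hb2L)
  have ha0 : a = 0 := by
    have h21 : ⟪b i2, b i1⟫ = 0 := by rw [hbo]; simp [hne.symm]
    rw [← hac, inner_add_left, real_inner_smul_left, real_inner_smul_left,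
      hbo i1 i1, if_pos rfl, hJo] at h21
    linarith
  have hb2 : b i2 = c • J (b i1) := by
    rw [← hac, ha0, zero_smul, zero_add]
  have hc2 : c * c = 1 := by
    have h22 : ⟪b i2, b i2⟫ = 1 := by rw [hbo]; simp
    rw [hb2, real_inner_smul_left, real_inner_smul_right, hJiso,
      hbo i1 i1, if_pos rfl] at h22
    linarith [h22]
  -- expansion of vectors of L in the adapted frame
  have expandL : ∀ v ∈ L, v = ⟪v, b i1⟫ • b i1 + ⟪v, b i2⟫ • b i2 := by
    intro v hv
    have h := b.sum_repr' v
    have hsplit := Finset.sum_filter_add_sum_filter_not Finset.univ inL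
      (fun i => ⟪b i, v⟫ • b i)
    have hzero : ∑ i ∈ Finset.univ.filter (fun i => ¬ inL i), ⟪b i, v⟫ • b i = 0 := by
      apply Finset.sum_eq_zero
      intro i hi
      have hiE : b i ∈ E := hbE i (by simpa using hi)
      rw [real_inner_comm, horth v hv _ hiE, zero_smul]
    have hSsum : ∑ i ∈ Finset.univ.filter inL, ⟪b i, v⟫ • b i
        = ⟪v, b i1⟫ • b i1 + ⟪v, b i2⟫ • b i2 := by
      rw [hSpair, Finset.sum_pair hne, real_inner_comm (b i1) v, real_inner_comm (b i2) v]
    conv_lhs => rw [← h, ← hsplit]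
    rw [hzero, add_zero, hSsum]
  have innerL : ∀ v ∈ L, ∀ w ∈ L,
      ⟪v, w⟫ = ⟪v, b i1⟫ * ⟪w, b i1⟫ + ⟪v, b i2⟫ * ⟪w, b i2⟫ := by
    intro v hv w hw
    conv_lhs => rw [expandL v hv]
    rw [inner_add_left, real_inner_smul_left, real_inner_smul_left,
      real_inner_comm (b i1) w, real_inner_comm (b i2) w]
  -- A vanishes on L × L
  have hALL : ∀ v ∈ L, ∀ w ∈ L, A v w = 0 := by
    intro v hv w hw
    have h12 : A (b i1) (b i2) = 0 := by
      rw [hb2, map_smul, hAJ, hNK]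
      simp
    have h21 : A (b i2) (b i1) = 0 := by
      rw [hAanti, h12, neg_zero]
    rw [expandL v hv, expandL w hw]
    simp [map_add, map_smul, LinearMap.add_apply, LinearMap.smul_apply,
      hNK (b i1), hNK (b i2), h12, h21]
  -- characterization of membership in E
  have memE : ∀ z : V, (∀ w ∈ L, ⟪z, w⟫ = 0) → z ∈ E := by
    intro z hz
    have hzmem : z ∈ L ⊔ E := by rw [hcompl.sup_eq_top]; trivial
    obtain ⟨v, hv, x, hx, hvx⟩ := Submodule.mem_sup.mp hzmem
    have h1 : ⟪z, v⟫ = 0 := hz v hv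
    rw [← hvx, inner_add_left] at h1
    have h2 : ⟪x, v⟫ = 0 := by rw [real_inner_comm]; exact horth v hv x hx
    have h3 : ⟪v, v⟫ = 0 := by linarith
    have h4 : v = 0 := by
      have := inner_self_eq_zero (𝕜 := ℝ) (x := v)
      exact this.mp h3
    rw [← hvx, h4, zero_add]
    exact hx
  -- mapping properties of A
  have hAEL : ∀ x ∈ E, ∀ v ∈ L, A x v ∈ E := by
    intro x hx v hv
    apply memE
    intro w hw
    rw [hcyc x v w, hALL v hv w hw, inner_zero_left]
  have hALE : ∀ v ∈ L, ∀ x ∈ E, A v x ∈ E := by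
    intro v hv x hx
    apply memE
    intro w hw
    rw [hAskew v x w, hALL v hv w hw, inner_zero_left, neg_zero]
  -- the F identity on the L-frame
  have hQ : ∀ x ∈ E, ∀ y ∈ E,
      ⟪A x (b i1), A y (b i1)⟫ + ⟪A x (b i2), A y (b i2)⟫ = k / 2 * ⟪x, y⟫ := by
    intro x hx y hy
    have h := hF x y
    rw [hSpair, Finset.sum_pair hne] at h
    have e1 : ⟪A x (A y (b i1)), b i1⟫ = -⟪A x (b i1), A y (b i1)⟫ := by
      rw [hAskew x (A y (b i1)) (b i1), real_inner_comm]
    have e2 : ⟪A x (A y (b i2)), b i2⟫ = -⟪A x (b i2), A y (b i2)⟫ := by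
      rw [hAskew x (A y (b i2)) (b i2), real_inner_comm]
    rw [e1, e2, hFE x hx, real_inner_smul_left] at h
    linarith
  have hQb2 : ∀ x ∈ E, ∀ y ∈ E,
      ⟪A x (b i2), A y (b i2)⟫ = ⟪A x (b i1), A y (b i1)⟫ := by
    intro x hx y hy
    rw [hb2, map_smul, map_smul, real_inner_smul_left, real_inner_smul_right,
      hAJ, hAJ, inner_neg_neg, hJiso, ← mul_assoc, hc2, one_mul]
  have hQ1 : ∀ x ∈ E, ∀ y ∈ E, ⟪A x (b i1), A y (b i1)⟫ = k / 4 * ⟪x, y⟫ := by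
    intro x hx y hy
    have h1 := hQ x hx y hy
    have h2 := hQb2 x hx y hy
    linarith
  have hQ2 : ∀ x ∈ E, ∀ y ∈ E, ⟪A x (b i2), A y (b i2)⟫ = k / 4 * ⟪x, y⟫ := by
    intro x hx y hy
    rw [hQb2 x hx y hy]
    exact hQ1 x hx y hy
  -- the key pointwise identity on L
  have hQL : ∀ x ∈ E, ∀ v ∈ L, ∀ w ∈ L,
      ⟪A x v, A x w⟫ = k / 4 * ⟪x, x⟫ * ⟪v, w⟫ := by
    intro x hx v hv w hw
    have hAv : A x v = ⟪v, b i1⟫ • A x (b i1) + ⟪v, b i2⟫ • A x (b i2) := by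
      conv_lhs => rw [expandL v hv]
      simp [map_add, map_smul]
    have hAw : A x w = ⟪w, b i1⟫ • A x (b i1) + ⟪w, b i2⟫ • A x (b i2) := by
      conv_lhs => rw [expandL w hw]
      simp [map_add, map_smul]
    have h12 : ⟪A x (b i1), A x (b i2)⟫ = 0 := by
      rw [hb2, map_smul, hAJ, real_inner_smul_right, inner_neg_right, hJo', neg_zero, mul_zero]
    have h21 : ⟪A x (b i2), A x (b i1)⟫ = 0 := by
      rw [real_inner_comm]; exact h12
    rw [hAv, hAw]
    simp only [inner_add_left, inner_add_right, real_inner_smul_left, real_inner_smul_right]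
    rw [h12, h21, hQ1 x hx x hx, hQ2 x hx x hx, innerL v hv w hw]
    ring
  -- expansion of inner products of E-vectors over the E-part of the frame
  have hsumE : ∀ u ∈ E, ∀ w ∈ E,
      ∑ i ∈ Finset.univ.filter (fun i => ¬ inL i), ⟪u, b i⟫ * ⟪w, b i⟫ = ⟪u, w⟫ := by
    intro u hu w hw
    have h := b.sum_inner_mul_inner u w
    have h' : ∑ i, ⟪u, b i⟫ * ⟪w, b i⟫ = ⟪u, w⟫ := by
      rw [← h]
      apply Finset.sum_congr rfl
      intro i _
      rw [real_inner_comm (b i) w]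
    rw [← Finset.sum_filter_add_sum_filter_not Finset.univ inL
      (fun i => ⟪u, b i⟫ * ⟪w, b i⟫)] at h'
    have hz : ∑ i ∈ Finset.univ.filter inL, ⟪u, b i⟫ * ⟪w, b i⟫ = 0 := by
      apply Finset.sum_eq_zero
      intro i hi
      have hiL : b i ∈ L := hbL i (by simpa using hi)
      rw [real_inner_comm (b i) u, horth _ hiL u hu, zero_mul]
    rw [hz, zero_add] at h'
    exact h'
  -- the inner products of r against the splitting
  have hrEE : ∀ x ∈ E, ∀ y ∈ E, ⟪r x, y⟫ = k * ⟪x, y⟫ := by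
    intro x hx y hy
    rw [hr]
    have h1 : ∑ i, ⟪A (b i) x, A (b i) y⟫ = ∑ i, ⟪A x (b i), A y (b i)⟫ := by
      apply Finset.sum_congr rfl
      intro i _
      rw [hAanti (b i) x, hAanti (b i) y, inner_neg_neg]
    rw [h1, ← Finset.sum_filter_add_sum_filter_not Finset.univ inL
      (fun i => ⟪A x (b i), A y (b i)⟫)]
    have hSs : ∑ i ∈ Finset.univ.filter inL, ⟪A x (b i), A y (b i)⟫ = k / 2 * ⟪x, y⟫ := by
      rw [hSpair, Finset.sum_pair hne, hQ1 x hx y hy, hQ2 x hx y hy]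
      ring
    have hTs : ∑ i ∈ Finset.univ.filter (fun i => ¬ inL i), ⟪A x (b i), A y (b i)⟫
        = k / 2 * ⟪x, y⟫ := by
      have hterm2 : ∀ i ∈ Finset.univ.filter (fun i => ¬ inL i),
          ⟪A x (b i), A y (b i)⟫
            = ⟪A x (b i1), b i⟫ * ⟪A y (b i1), b i⟫
              + ⟪A x (b i2), b i⟫ * ⟪A y (b i2), b i⟫ := by
        intro i hi
        have hiE : b i ∈ E := hbE i (by simpa using hi)
        rw [innerL _ (hAE x hx _ hiE) _ (hAE y hy _ hiE),
          hAskew x (b i) (b i1), hAskew y (b i) (b i1),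
          hAskew x (b i) (b i2), hAskew y (b i) (b i2)]
        ring
      rw [Finset.sum_congr rfl hterm2, Finset.sum_add_distrib,
        hsumE _ (hAEL x hx _ hb1L) _ (hAEL y hy _ hb1L),
        hsumE _ (hAEL x hx _ hb2L) _ (hAEL y hy _ hb2L)]
      exact hQ x hx y hy
    rw [hSs, hTs]
    ring
  have hrEL : ∀ x ∈ E, ∀ w ∈ L, ⟪r x, w⟫ = 0 := by
    intro x hx w hw
    rw [hr]
    apply Finset.sum_eq_zero
    intro i _
    by_cases hi : inL i
    · rw [hALL _ (hbL i hi) w hw, inner_zero_right]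
    · have hiE := hbE i hi
      exact horth _ (hAE _ hiE x hx) _ (hAEL _ hiE w hw)
  have hrLL : ∀ v ∈ L, ∀ w ∈ L, ⟪r v, w⟫ = k * ((n : ℝ) - 1) / 2 * ⟪v, w⟫ := by
    intro v hv w hw
    rw [hr, ← Finset.sum_filter_add_sum_filter_not Finset.univ inL
      (fun i => ⟪A (b i) v, A (b i) w⟫)]
    have hS0 : ∑ i ∈ Finset.univ.filter inL, ⟪A (b i) v, A (b i) w⟫ = 0 := by
      apply Finset.sum_eq_zero
      intro i hi
      rw [hALL _ (hbL i (by simpa using hi)) v hv, inner_zero_left]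
    have hTs : ∑ i ∈ Finset.univ.filter (fun i => ¬ inL i), ⟪A (b i) v, A (b i) w⟫
        = ((2 * n - 2 : ℕ) : ℝ) * (k / 4 * ⟪v, w⟫) := by
      have hterm : ∀ i ∈ Finset.univ.filter (fun i => ¬ inL i),
          ⟪A (b i) v, A (b i) w⟫ = k / 4 * ⟪v, w⟫ := by
        intro i hi
        have hiE : b i ∈ E := hbE i (by simpa using hi)
        rw [hQL _ hiE v hv w hw, hbo i i]
        simp
      rw [Finset.sum_congr rfl hterm, Finset.sum_const, hTcard, nsmul_eq_mul]
    rw [hS0, hTs, zero_add]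
    have hcast : ((2 * n - 2 : ℕ) : ℝ) = 2 * (n : ℝ) - 2 := by
      rw [Nat.cast_sub (by omega)]
      push_cast
      ring
    rw [hcast]
    ring
  have hrLE : ∀ v ∈ L, ∀ x ∈ E, ⟪r v, x⟫ = 0 := by
    intro v hv x hx
    rw [hr]
    apply Finset.sum_eq_zero
    intro i _
    by_cases hi : inL i
    · rw [hALL _ (hbL i hi) v hv, inner_zero_left]
    · have hiE := hbE i hi
      rw [real_inner_comm]
      exact horth _ (hAE _ hiE x hx) _ (hAEL _ hiE v hv)
  constructor
  · intro v hv
    apply ext_inner_right ℝ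
    intro z
    have hzmem : z ∈ L ⊔ E := by rw [hcompl.sup_eq_top]; trivial
    obtain ⟨w, hw, x, hx, hwx⟩ := Submodule.mem_sup.mp hzmem
    rw [← hwx, inner_add_right, inner_add_right, hrLL v hv w hw, hrLE v hv x hx,
      real_inner_smul_left, real_inner_smul_left, horth v hv x hx]
    ring
  · intro x hx
    apply ext_inner_right ℝ
    intro z
    have hzmem : z ∈ L ⊔ E := by rw [hcompl.sup_eq_top]; trivial
    obtain ⟨w, hw, y, hy, hwy⟩ := Submodule.mem_sup.mp hzmem
    have hxw : ⟪x, w⟫ = 0 := by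
      rw [real_inner_comm w x]
      exact horth w hw x hx
    rw [← hwy, inner_add_right, inner_add_right, hrEL x hx w hw, hrEE x hx y hy,
      real_inner_smul_left, real_inner_smul_left, hxw]
    ring
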